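/- (Nonexistence of positive solutions of the comparison inequality.) Let R₀ > 0, A ≥ 0, and c > 0. There is no twice continuously differentiable function v : [R₀,∞) → ℝ satisfying v(r) > 0 and v''(r) ≤ (A/r² − c)·v(r) for all r ≥ R₀. -/

import Mathlib

open Set Filter

/-- Helper: if `f` is continuous on `[a,∞)` and has nonpositive derivative on
`(a,∞)`, then it is antitone on `[a,∞)`. -/
lemma antitone_of_deriv_nonpos_Ici (a : ℝ) (f f' : ℝ → ℝ)
    (hcont : ContinuousOn f (Set.Ici a))
    (hderiv : ∀ x ∈ Set.Ioi a, HasDerivAt f (f' x) x)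
    (hle : ∀ x ∈ Set.Ioi a, f' x ≤ 0) :
    AntitoneOn f (Set.Ici a) := by
  apply antitoneOn_of_deriv_nonpos (convex_Ici a) hcont
  · rw [interior_Ici]
    exact fun x hx => (hderiv x hx).differentiableAt.differentiableWithinAt
  · rw [interior_Ici]
    intro x hx
    rw [(hderiv x hx).deriv]
    exact hle x hx

/-- there is no positive `C²` function on `[R₀,∞)` satisfying
`v'' ≤ (A/r² - c) v` with `A ≥ 0` and `c > 0`. -/
theorem no_positive_subsolution
    (R₀ A c : ℝ) (hR₀ : 0 < R₀) (hA : 0 ≤ A) (hc : 0 < c) :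
    ¬ ∃ v v' v'' : ℝ → ℝ,
      ContDiffOn ℝ 2 v (Set.Ici R₀) ∧
      (∀ r ∈ Set.Ici R₀, HasDerivWithinAt v (v' r) (Set.Ici R₀) r) ∧
      (∀ r ∈ Set.Ici R₀, HasDerivWithinAt v' (v'' r) (Set.Ici R₀) r) ∧
      (∀ r ∈ Set.Ici R₀, 0 < v r) ∧
      (∀ r ∈ Set.Ici R₀, v'' r ≤ (A / r ^ 2 - c) * v r) := by
  rintro ⟨v, v', v'', hC2, hv', hv'', hpos, hineq⟩
  -- derivatives as `HasDerivAt` on the open ray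
  have hvAt : ∀ x ∈ Set.Ioi R₀, HasDerivAt v (v' x) x := fun x hx =>
    (hv' x (Set.mem_Ici.mpr (le_of_lt hx))).hasDerivAt (Ici_mem_nhds hx)
  have hv'At : ∀ x ∈ Set.Ioi R₀, HasDerivAt v' (v'' x) x := fun x hx =>
    (hv'' x (Set.mem_Ici.mpr (le_of_lt hx))).hasDerivAt (Ici_mem_nhds hx)
  have hvcont : ContinuousOn v (Set.Ici R₀) := fun x hx =>
    (hv' x hx).continuousWithinAt
  have hv'cont : ContinuousOn v' (Set.Ici R₀) := fun x hx =>
    (hv'' x hx).continuousWithinAt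
  -- choose `R₁` so large that `A / r² ≤ c/2` there
  set R₁ : ℝ := max R₀ (Real.sqrt (2 * A / c)) with hR₁def
  have hR₁R₀ : R₀ ≤ R₁ := le_max_left _ _
  have hR₁pos : 0 < R₁ := lt_of_lt_of_le hR₀ hR₁R₀
  have hkey : ∀ r, R₁ ≤ r → v'' r ≤ -(c / 2) * v r := by
    intro r hr
    have hrR₀ : R₀ ≤ r := le_trans hR₁R₀ hr
    have hrpos : 0 < r := lt_of_lt_of_le hR₀ hrR₀
    have hsq : 2 * A / c ≤ r ^ 2 := by
      have h1 : Real.sqrt (2 * A / c) ≤ r := le_trans (le_max_right _ _) hr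
      have h2 : 2 * A / c ≤ Real.sqrt (2 * A / c) ^ 2 := by
        rw [Real.sq_sqrt (by positivity)]
      exact le_trans h2 (by nlinarith [Real.sqrt_nonneg (2 * A / c)])
    have hAr : A / r ^ 2 ≤ c / 2 := by
      rw [div_le_iff₀ (by positivity)]
      rw [div_le_iff₀ hc] at hsq
      nlinarith
    have := hineq r hrR₀
    have hvr := hpos r hrR₀
    nlinarith
  -- Step A: `v' ≥ 0` on `[R₁, ∞)`
  have hv'nonneg : ∀ r, R₁ ≤ r → 0 ≤ v' r := by
    intro r₁ hr₁
    by_contra hneg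
    push_neg at hneg
    have hr₁R₀ : R₀ ≤ r₁ := le_trans hR₁R₀ hr₁
    -- v' is antitone on [r₁, ∞)
    have hant : AntitoneOn v' (Set.Ici r₁) := by
      apply antitone_of_deriv_nonpos_Ici r₁ v' v''
      · exact hv'cont.mono (Set.Ici_subset_Ici.mpr hr₁R₀)
      · exact fun x hx => hv'At x (lt_of_le_of_lt hr₁R₀ hx)
      · intro x hx
        have hxr₁ : R₁ ≤ x := le_trans hr₁ (le_of_lt hx)
        have := hkey x hxr₁
        have := hpos x (le_trans hR₁R₀ hxr₁)
        nlinarith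
    -- so `v x ≤ v r₁ + v' r₁ * (x - r₁)`
    have hlin : ∀ x, r₁ ≤ x → v x ≤ v r₁ + v' r₁ * (x - r₁) := by
      intro x hx
      set g : ℝ → ℝ := fun t => v t - v' r₁ * t with hg
      have hgant : AntitoneOn g (Set.Ici r₁) := by
        apply antitone_of_deriv_nonpos_Ici r₁ g (fun t => v' t - v' r₁)
        · exact (hvcont.mono (Set.Ici_subset_Ici.mpr hr₁R₀)).sub
            (continuousOn_const.mul continuousOn_id)
        · intro t ht
          have hd := ((hvAt t (lt_of_le_of_lt hr₁R₀ ht)).sub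
            ((hasDerivAt_id t).const_mul (v' r₁)))
          simp only [mul_one] at hd
          exact hd
        · intro t ht
          have := hant (Set.self_mem_Ici) (le_of_lt ht : r₁ ≤ t) (le_of_lt ht)
          linarith
      have := hgant (Set.self_mem_Ici) hx hx
      simp only [g] at this
      linarith
    -- plug in a large x to get v x ≤ negative
    set x := r₁ + v r₁ / (-(v' r₁)) + 1 with hx
    have hxr₁ : r₁ ≤ x := by
      have h0 : 0 ≤ v r₁ / (-(v' r₁)) := by
        apply div_nonneg (le_of_lt (hpos r₁ hr₁R₀)); linarith
      rw [hx]; linarith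
    have hvx := hpos x (le_trans hr₁R₀ hxr₁)
    have hb := hlin x hxr₁
    have hne : -(v' r₁) ≠ 0 := by linarith
    have : v' r₁ * (x - r₁) = -(v r₁) + v' r₁ := by
      rw [hx]
      have hne' : v' r₁ ≠ 0 := neg_ne_zero.mp hne
      field_simp
      ring
    nlinarith
  -- Step B: `v` is nondecreasing past `R₁`, so bounded below by `m > 0`
  set m := v R₁ with hm
  have hmpos : 0 < m := hpos R₁ hR₁R₀
  have hvlow : ∀ r, R₁ ≤ r → m ≤ v r := by
    intro r hr
    -- -v is antitone on [R₁,∞)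
    have hant : AntitoneOn (fun t => -v t) (Set.Ici R₁) := by
      apply antitone_of_deriv_nonpos_Ici R₁ _ (fun t => -(v' t))
      · exact (hvcont.mono (Set.Ici_subset_Ici.mpr hR₁R₀)).neg
      · exact fun t ht => (hvAt t (lt_of_le_of_lt hR₁R₀ ht)).neg
      · intro t ht
        have := hv'nonneg t (le_of_lt ht)
        linarith
    have := hant (Set.self_mem_Ici) hr hr
    simpa [hm] using this
  -- then `v'' ≤ -(c/2) m` past `R₁`, forcing `v'` to become negative
  have hdecr : ∀ r, R₁ ≤ r → v' r ≤ v' R₁ - c / 2 * m * (r - R₁) := by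
    intro r hr
    set h : ℝ → ℝ := fun t => v' t + c / 2 * m * t with hh
    have hant : AntitoneOn h (Set.Ici R₁) := by
      apply antitone_of_deriv_nonpos_Ici R₁ h (fun t => v'' t + c / 2 * m)
      · exact (hv'cont.mono (Set.Ici_subset_Ici.mpr hR₁R₀)).add
          (continuousOn_const.mul continuousOn_id)
      · intro t ht
        have hd := ((hv'At t (lt_of_le_of_lt hR₁R₀ ht)).add
          ((hasDerivAt_id t).const_mul (c / 2 * m)))
        simp only [mul_one] at hd
        exact hd
      · intro t ht
        have h1 := hkey t (le_of_lt ht)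
        have h2 := hvlow t (le_of_lt ht)
        nlinarith
    have := hant (Set.self_mem_Ici) hr hr
    simp only [h] at this
    nlinarith
  -- contradiction at a large point
  set r := R₁ + v' R₁ / (c / 2 * m) + 1 with hr
  have hv'R₁ : 0 ≤ v' R₁ := hv'nonneg R₁ le_rfl
  have hcm : 0 < c / 2 * m := by positivity
  have hrR₁ : R₁ ≤ r := by
    have h0 : 0 ≤ v' R₁ / (c / 2 * m) := div_nonneg hv'R₁ (le_of_lt hcm)
    rw [hr]; linarith
  have h1 := hdecr r hrR₁
  have h2 := hv'nonneg r hrR₁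
  have : c / 2 * m * (r - R₁) = v' R₁ + c / 2 * m := by
    rw [hr]
    field_simp
    ring
  nlinarith
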